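/- Let F be a random edge set obtained by independently including each edge e of G with probability y_e, and suppose that for every nontrivial vertex subset R the probability that both |F∩δ(R)∩S| < p and |F∩δ(R)| < p+q occur is at most n^{−10}; suppose moreover the number of nontrivial cuts R with capacity below 4p(p+q) is at most C·n^8 and for each integer ℓ ≥ 4 the number of cuts with capacity in [ℓp(p+q), (ℓ+1)p(p+q)) is at most C·n^{2ℓ+2}, while cuts in the latter class have bad-event probability at most n^{−5ℓ}. Then the total probability that some cut witnesses infeasibility of F is at most C·n^{−2} + C·Σ_{ℓ≥4} n^{−3ℓ+2}, which is at most 1/6 for all sufficiently large n. -/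

import Mathlib

open Finset

/-- The set of edges with exactly one endpoint in `R`. -/
def cutEdges {V ε : Type} [DecidableEq V] [Fintype ε] [DecidableEq ε]
    (ends : ε → V × V) (R : Finset V) : Finset ε :=
  Finset.univ.filter fun e =>
    ((ends e).1 ∈ R ∧ (ends e).2 ∉ R) ∨ ((ends e).2 ∈ R ∧ (ends e).1 ∉ R)

open MeasureTheory ProbabilityTheory

lemma aux_form (n : ℕ) (j : ℕ) :
    (1:ℝ)/(n:ℝ)^(3*(j+4)-2) = (1/(n:ℝ)^10) * ((1/(n:ℝ)^3))^j := by
  rw [show 3*(j+4)-2 = 10 + 3*j from by omega, pow_add, pow_mul]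
  rw [one_div, one_div, one_div, mul_inv, inv_pow]

lemma aux_r_lt (n : ℕ) (hn2 : 2 ≤ n) : (1:ℝ)/(n:ℝ)^3 < 1 := by
  have h : (1:ℝ) < (n:ℝ)^3 := by
    have : (2:ℝ) ≤ n := by exact_mod_cast hn2
    nlinarith [sq_nonneg ((n:ℝ))]
  rw [div_lt_one (by linarith)]; linarith

lemma aux_r_nonneg (n : ℕ) : (0:ℝ) ≤ 1/(n:ℝ)^3 := by positivity

lemma aux_summable (n : ℕ) (hn2 : 2 ≤ n) :
    Summable (fun j : ℕ => (1:ℝ)/(n:ℝ)^(3*(j+4)-2)) := by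
  have := (summable_geometric_of_lt_one (aux_r_nonneg n) (aux_r_lt n hn2)).mul_left
    ((1:ℝ)/(n:ℝ)^10)
  exact this.congr fun j => (aux_form n j).symm

lemma aux_tsum_le (n : ℕ) (hn2 : 2 ≤ n) :
    ∑' j : ℕ, (1:ℝ)/(n:ℝ)^(3*(j+4)-2) ≤ 2/(n:ℝ)^10 := by
  have hn : (2:ℝ) ≤ n := by exact_mod_cast hn2
  have h1 : ∑' j : ℕ, (1:ℝ)/(n:ℝ)^(3*(j+4)-2)
      = (1/(n:ℝ)^10) * (1 - 1/(n:ℝ)^3)⁻¹ := by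
    rw [tsum_congr (aux_form n), tsum_mul_left,
      tsum_geometric_of_lt_one (aux_r_nonneg n) (aux_r_lt n hn2)]
  rw [h1]
  have h2 : (1:ℝ)/(n:ℝ)^3 ≤ 1/8 := by
    apply div_le_div_of_nonneg_left (by norm_num) (by norm_num)
    nlinarith [pow_le_pow_left₀ (by norm_num : (0:ℝ) ≤ 2) hn 3]
  have h3 : (0:ℝ) < (n:ℝ)^10 := by positivity
  have h4 : (1 - 1/(n:ℝ)^3)⁻¹ ≤ 2 := by
    rw [inv_le_comm₀ (by linarith) (by norm_num)]
    linarith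
  calc 1/(n:ℝ)^10 * (1 - 1/(n:ℝ)^3)⁻¹ ≤ 1/(n:ℝ)^10 * 2 := by
        apply mul_le_mul_of_nonneg_left h4 (by positivity)
    _ = 2/(n:ℝ)^10 := by ring

lemma aux_eventually (C : ℝ) (hC : 0 < C) :
    ∃ N : ℕ, ∀ n' : ℕ, N ≤ n' →
      C * (1 / (n' : ℝ) ^ 2) + C * ∑' ℓ : ℕ, 1 / (n' : ℝ) ^ (3 * (ℓ + 4) - 2) ≤ 1 / 6 := by
  refine ⟨max 2 ⌈18*C⌉₊, fun n' hn' => ?_⟩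
  have h2 : 2 ≤ n' := le_trans (le_max_left _ _) hn'
  have h2R : (2:ℝ) ≤ (n':ℝ) := by exact_mod_cast h2
  have h18 : 18*C ≤ (n':ℝ) := by
    have h := le_trans (le_max_right 2 ⌈18*C⌉₊) hn'
    exact le_trans (Nat.le_ceil _) (by exact_mod_cast h)
  have htsum := aux_tsum_le n' h2
  have h0 : (0:ℝ) < (n':ℝ)^2 := by positivity
  have h10 : (0:ℝ) < (n':ℝ)^10 := by positivity
  have hpow : (n':ℝ)^2 ≤ (n':ℝ)^10 :=
    pow_le_pow_right₀ (by linarith) (by norm_num)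
  have step1 : C * ∑' ℓ : ℕ, 1 / (n' : ℝ) ^ (3 * (ℓ + 4) - 2) ≤ C * (2/(n':ℝ)^10) :=
    mul_le_mul_of_nonneg_left htsum hC.le
  have step2 : (2:ℝ)/(n':ℝ)^10 ≤ 2/(n':ℝ)^2 := by gcongr
  have step3 : C * (2/(n':ℝ)^10) ≤ C * (2/(n':ℝ)^2) :=
    mul_le_mul_of_nonneg_left step2 hC.le
  have final : C * (1/(n':ℝ)^2) + C * (2/(n':ℝ)^2) ≤ 1/6 := by
    have heq : C * (1/(n':ℝ)^2) + C * (2/(n':ℝ)^2) = 3*C/(n':ℝ)^2 := by ring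
    rw [heq, div_le_div_iff₀ h0 (by norm_num)]
    nlinarith [sq_nonneg ((n':ℝ) - 1), sq_nonneg ((n':ℝ) - 2)]
  linarith

/-- Union bound over cut classes: if every bad event (a cut having fewer than `p`
safe and fewer than `p+q` total `F`-edges) has probability at most `n^{-10}`, the
number of nontrivial cuts of capacity below `4p(p+q)` is at most `C·n^8`, and for
every `ℓ ≥ 4` there are at most `C·n^{2ℓ+2}` cuts of capacity in
`[ℓp(p+q), (ℓ+1)p(p+q))`, each bad with probability at most `n^{-5ℓ}`, then the
probability that some nontrivial cut witnesses infeasibility of the random set `F`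
is at most `C·n^{-2} + C·Σ_{ℓ≥4} n^{-(3ℓ-2)}`, a quantity which is at most `1/6`
for all sufficiently large `n`. -/
theorem union_bound_over_cuts {Ω : Type} [MeasureSpace Ω]
    [IsProbabilityMeasure (ℙ : Measure Ω)]
    {V ε : Type} [Fintype V] [DecidableEq V] [Fintype ε] [DecidableEq ε]
    (ends : ε → V × V) (S : Finset ε) (p q : ℕ) (hp : 1 ≤ p)
    (n : ℕ) (hn : n = Fintype.card V) (hn2 : 2 ≤ n)
    (cap : Finset V → ℝ) (C : ℝ) (hC : 0 < C)
    (y : ε → ℝ) (hy : ∀ e, 0 ≤ y e ∧ y e ≤ 1)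
    (F : Ω → Finset ε)
    (hindep : iIndepFun
      (fun (e : ε) (ω : Ω) => decide (e ∈ F ω)) ℙ)
    (hprob : ∀ e : ε, ℙ {ω | e ∈ F ω} = ENNReal.ofReal (y e))
    (hbadall : ∀ R : Finset V, R.Nonempty → R ≠ Finset.univ →
      ℙ {ω | ((F ω ∩ cutEdges ends R) ∩ S).card < p ∧
          (F ω ∩ cutEdges ends R).card < p + q} ≤ ENNReal.ofReal (1 / (n : ℝ) ^ 10))
    (hsmall : (Set.ncard {R : Finset V | R.Nonempty ∧ R ≠ Finset.univ ∧
        cap R < 4 * p * (p + q)} : ℝ) ≤ C * (n : ℝ) ^ 8)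
    (hcount : ∀ ℓ : ℕ, 4 ≤ ℓ →
      (Set.ncard {R : Finset V | R.Nonempty ∧ R ≠ Finset.univ ∧
          (ℓ : ℝ) * (p * (p + q)) ≤ cap R ∧
          cap R < ((ℓ : ℝ) + 1) * (p * (p + q))} : ℝ) ≤ C * (n : ℝ) ^ (2 * ℓ + 2))
    (hbadlarge : ∀ ℓ : ℕ, 4 ≤ ℓ → ∀ R : Finset V, R.Nonempty → R ≠ Finset.univ →
      (ℓ : ℝ) * (p * (p + q)) ≤ cap R → cap R < ((ℓ : ℝ) + 1) * (p * (p + q)) →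
      ℙ {ω | ((F ω ∩ cutEdges ends R) ∩ S).card < p ∧
          (F ω ∩ cutEdges ends R).card < p + q} ≤ ENNReal.ofReal (1 / (n : ℝ) ^ (5 * ℓ))) :
    ℙ (⋃ R : Finset V, ⋃ (_ : R.Nonempty ∧ R ≠ Finset.univ),
        {ω | ((F ω ∩ cutEdges ends R) ∩ S).card < p ∧
          (F ω ∩ cutEdges ends R).card < p + q}) ≤
      ENNReal.ofReal (C * (1 / (n : ℝ) ^ 2) +
        C * ∑' ℓ : ℕ, 1 / (n : ℝ) ^ (3 * (ℓ + 4) - 2)) ∧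
    ∃ N : ℕ, ∀ n' : ℕ, N ≤ n' →
      C * (1 / (n' : ℝ) ^ 2) + C * ∑' ℓ : ℕ, 1 / (n' : ℝ) ^ (3 * (ℓ + 4) - 2) ≤ 1 / 6 := by
  classical
  refine ⟨?_, aux_eventually C hC⟩
  have hn2R : (2:ℝ) ≤ (n:ℝ) := by exact_mod_cast hn2
  have hn0 : (0:ℝ) < (n:ℝ) := by linarith
  have hnne : (n:ℝ) ≠ 0 := ne_of_gt hn0
  set pp : ℝ := (p:ℝ) * ((p:ℝ) + (q:ℝ)) with hppdef
  have hpR : (1:ℝ) ≤ (p:ℝ) := by exact_mod_cast hp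
  have hqR : (0:ℝ) ≤ (q:ℝ) := Nat.cast_nonneg q
  have hpp : 0 < pp := by rw [hppdef]; nlinarith
  set Bad : Finset V → Set Ω := fun R =>
    {ω | ((F ω ∩ cutEdges ends R) ∩ S).card < p ∧ (F ω ∩ cutEdges ends R).card < p + q}
    with hBad
  set κ : Finset V → ℕ := fun R => ⌊cap R / pp⌋₊ with hκ
  set L : ℕ := Finset.univ.sup κ with hL
  set S0 : Finset (Finset V) := Finset.univ.filter
    (fun R => R.Nonempty ∧ R ≠ Finset.univ ∧ cap R < 4 * (p:ℝ) * ((p:ℝ) + (q:ℝ))) with hS0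
  set T : ℕ → Finset (Finset V) := fun ℓ => Finset.univ.filter
    (fun R => R.Nonempty ∧ R ≠ Finset.univ ∧ (ℓ:ℝ) * pp ≤ cap R ∧
      cap R < ((ℓ:ℝ) + 1) * pp) with hT
  -- class facts for large cuts
  have hclass : ∀ R : Finset V, ¬ (cap R < 4 * (p:ℝ) * ((p:ℝ) + (q:ℝ))) →
      4 ≤ κ R ∧ (κ R : ℝ) * pp ≤ cap R ∧ cap R < ((κ R : ℝ) + 1) * pp := by
    intro R hc
    push_neg at hc
    have h4 : 4 * pp ≤ cap R := by rw [hppdef]; linarith [mul_assoc (4:ℝ) (p:ℝ) ((p:ℝ)+(q:ℝ))]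
    have hge4 : (4:ℝ) ≤ cap R / pp := (le_div_iff₀ hpp).mpr (by linarith)
    have hκ4 : 4 ≤ κ R := Nat.le_floor (by exact_mod_cast hge4)
    have hnonneg : 0 ≤ cap R / pp := by linarith
    have hlow : ((κ R : ℝ)) ≤ cap R / pp := Nat.floor_le hnonneg
    have hhigh : cap R / pp < (κ R : ℝ) + 1 := Nat.lt_floor_add_one _
    exact ⟨hκ4, (le_div_iff₀ hpp).mp hlow, (div_lt_iff₀ hpp).mp hhigh⟩
  -- the two covering events
  set A : Set Ω := ⋃ R ∈ S0, Bad R with hA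
  set B : Set Ω := ⋃ ℓ ∈ Finset.Icc 4 L, ⋃ R ∈ T ℓ, Bad R with hB
  have hsub : (⋃ R : Finset V, ⋃ (_ : R.Nonempty ∧ R ≠ Finset.univ), Bad R) ⊆ A ∪ B := by
    intro ω hω
    simp only [Set.mem_iUnion] at hω
    obtain ⟨R, ⟨hne, hnu⟩, hωR⟩ := hω
    by_cases hc : cap R < 4 * (p:ℝ) * ((p:ℝ) + (q:ℝ))
    · left
      simp only [hA, Set.mem_iUnion]
      exact ⟨R, by simp [hS0, hne, hnu, hc], hωR⟩
    · right
      obtain ⟨h1, h2, h3⟩ := hclass R hc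
      have hκL : κ R ≤ L := Finset.le_sup (Finset.mem_univ R)
      simp only [hB, Set.mem_iUnion]
      exact ⟨κ R, Finset.mem_Icc.mpr ⟨h1, hκL⟩, R, by simp [hT, hne, hnu, h2, h3], hωR⟩
  -- bound for A
  have hcard0 : (S0.card : ℝ) ≤ C * (n:ℝ)^8 := by
    have hset : {R : Finset V | R.Nonempty ∧ R ≠ Finset.univ ∧
        cap R < 4 * (p:ℝ) * ((p:ℝ) + (q:ℝ))} = ↑S0 := by
      ext R; simp [hS0]
    have := hsmall
    rw [hset, Set.ncard_coe_finset] at this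
    exact this
  have hAbound : ℙ A ≤ ENNReal.ofReal (C * (1 / (n:ℝ)^2)) := by
    calc ℙ A ≤ ∑ R ∈ S0, ℙ (Bad R) := measure_biUnion_finset_le S0 Bad
      _ ≤ ∑ R ∈ S0, ENNReal.ofReal (1 / (n:ℝ)^10) := by
          refine Finset.sum_le_sum fun R hR => ?_
          simp only [hS0, Finset.mem_filter] at hR
          exact hbadall R hR.2.1 hR.2.2.1
      _ = S0.card • ENNReal.ofReal (1 / (n:ℝ)^10) := Finset.sum_const _
      _ = ENNReal.ofReal ((S0.card : ℝ) * (1 / (n:ℝ)^10)) := by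
          rw [nsmul_eq_mul, ← ENNReal.ofReal_natCast S0.card,
            ← ENNReal.ofReal_mul (Nat.cast_nonneg _)]
      _ ≤ ENNReal.ofReal (C * (1 / (n:ℝ)^2)) := by
          apply ENNReal.ofReal_le_ofReal
          calc (S0.card : ℝ) * (1 / (n:ℝ)^10)
              ≤ (C * (n:ℝ)^8) * (1 / (n:ℝ)^10) :=
                mul_le_mul_of_nonneg_right hcard0 (by positivity)
            _ = C * (1 / (n:ℝ)^2) := by field_simp
  -- bound for each class ℓ
  have hTbound : ∀ ℓ : ℕ, 4 ≤ ℓ →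
      ℙ (⋃ R ∈ T ℓ, Bad R) ≤ ENNReal.ofReal (C * (1 / (n:ℝ)^(3*ℓ-2))) := by
    intro ℓ hℓ4
    have hcardℓ : ((T ℓ).card : ℝ) ≤ C * (n:ℝ)^(2*ℓ+2) := by
      have hset : {R : Finset V | R.Nonempty ∧ R ≠ Finset.univ ∧
          (ℓ : ℝ) * ((p:ℝ) * ((p:ℝ) + (q:ℝ))) ≤ cap R ∧
          cap R < ((ℓ : ℝ) + 1) * ((p:ℝ) * ((p:ℝ) + (q:ℝ)))} = ↑(T ℓ) := by
        ext R; simp [hT, hppdef]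
      have := hcount ℓ hℓ4
      rw [hset, Set.ncard_coe_finset] at this
      exact this
    calc ℙ (⋃ R ∈ T ℓ, Bad R) ≤ ∑ R ∈ T ℓ, ℙ (Bad R) := measure_biUnion_finset_le _ _
      _ ≤ ∑ R ∈ T ℓ, ENNReal.ofReal (1 / (n:ℝ)^(5*ℓ)) := by
          refine Finset.sum_le_sum fun R hR => ?_
          simp only [hT, Finset.mem_filter] at hR
          refine hbadlarge ℓ hℓ4 R hR.2.1 hR.2.2.1 ?_ ?_
          · rw [hppdef] at hR; exact hR.2.2.2.1
          · rw [hppdef] at hR; exact hR.2.2.2.2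
      _ = (T ℓ).card • ENNReal.ofReal (1 / (n:ℝ)^(5*ℓ)) := Finset.sum_const _
      _ = ENNReal.ofReal (((T ℓ).card : ℝ) * (1 / (n:ℝ)^(5*ℓ))) := by
          rw [nsmul_eq_mul, ← ENNReal.ofReal_natCast (T ℓ).card,
            ← ENNReal.ofReal_mul (Nat.cast_nonneg _)]
      _ ≤ ENNReal.ofReal (C * (1 / (n:ℝ)^(3*ℓ-2))) := by
          apply ENNReal.ofReal_le_ofReal
          have hsplit : (n:ℝ)^(5*ℓ) = (n:ℝ)^(2*ℓ+2) * (n:ℝ)^(3*ℓ-2) := by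
            rw [← pow_add]; congr 1; omega
          calc ((T ℓ).card : ℝ) * (1 / (n:ℝ)^(5*ℓ))
              ≤ (C * (n:ℝ)^(2*ℓ+2)) * (1 / (n:ℝ)^(5*ℓ)) :=
                mul_le_mul_of_nonneg_right hcardℓ (by positivity)
            _ = C * (1 / (n:ℝ)^(3*ℓ-2)) := by
                rw [hsplit]; field_simp
  -- bound for B
  have hBbound : ℙ B ≤ ENNReal.ofReal (C * ∑' j : ℕ, 1 / (n:ℝ)^(3*(j+4)-2)) := by
    calc ℙ B ≤ ∑ ℓ ∈ Finset.Icc 4 L, ℙ (⋃ R ∈ T ℓ, Bad R) :=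
          measure_biUnion_finset_le _ _
      _ ≤ ∑ ℓ ∈ Finset.Icc 4 L, ENNReal.ofReal (C * (1 / (n:ℝ)^(3*ℓ-2))) := by
          refine Finset.sum_le_sum fun ℓ hℓ => ?_
          exact hTbound ℓ (Finset.mem_Icc.mp hℓ).1
      _ = ENNReal.ofReal (∑ ℓ ∈ Finset.Icc 4 L, C * (1 / (n:ℝ)^(3*ℓ-2))) :=
          (ENNReal.ofReal_sum_of_nonneg fun ℓ _ => by positivity).symm
      _ ≤ ENNReal.ofReal (C * ∑' j : ℕ, 1 / (n:ℝ)^(3*(j+4)-2)) := by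
          apply ENNReal.ofReal_le_ofReal
          rw [← Finset.mul_sum]
          refine mul_le_mul_of_nonneg_left ?_ hC.le
          have hrw : ∑ ℓ ∈ Finset.Icc 4 L, (1 / (n:ℝ)^(3*ℓ-2))
              = ∑ j ∈ (Finset.Icc 4 L).image (· - 4), 1 / (n:ℝ)^(3*(j+4)-2) := by
            rw [Finset.sum_image (fun x hx y hy h => by
              have hx4 := (Finset.mem_Icc.mp hx).1
              have hy4 := (Finset.mem_Icc.mp hy).1
              omega)]
            refine Finset.sum_congr rfl fun ℓ hℓ => ?_
            have hℓ4 := (Finset.mem_Icc.mp hℓ).1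
            rw [show ℓ - 4 + 4 = ℓ from by omega]
          rw [hrw]
          exact Summable.sum_le_tsum _ (fun j _ => by positivity) (aux_summable n hn2)
  -- combine
  have hsum : ℙ (⋃ R : Finset V, ⋃ (_ : R.Nonempty ∧ R ≠ Finset.univ), Bad R)
      ≤ ℙ A + ℙ B := (measure_mono hsub).trans (measure_union_le A B)
  have hnonnegA : 0 ≤ C * (1 / (n:ℝ)^2) := by positivity
  have hnonnegB : 0 ≤ C * ∑' j : ℕ, 1 / (n:ℝ)^(3*(j+4)-2) :=
    mul_nonneg hC.le (tsum_nonneg fun j => by positivity)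
  calc ℙ (⋃ R : Finset V, ⋃ (_ : R.Nonempty ∧ R ≠ Finset.univ), Bad R)
      ≤ ℙ A + ℙ B := hsum
    _ ≤ ENNReal.ofReal (C * (1 / (n:ℝ)^2))
        + ENNReal.ofReal (C * ∑' j : ℕ, 1 / (n:ℝ)^(3*(j+4)-2)) :=
        add_le_add hAbound hBbound
    _ = ENNReal.ofReal (C * (1 / (n:ℝ)^2)
        + C * ∑' j : ℕ, 1 / (n:ℝ)^(3*(j+4)-2)) :=
        (ENNReal.ofReal_add hnonnegA hnonnegB).symm
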